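/- Let X be a metric space with its Borel σ-algebra and let γ be a finite Borel measure on X with γ(X) > 0. Under the hypotheses of the combined-estimator convergence lemma — namely: finite index sets I_ℓ for ℓ ∈ {1,…,L}, measurable partitions {A_{ℓ,i}}_{i∈I_ℓ} of X, finite measures μ^R_{ℓ,i} on X, combination weights k^R_ℓ ≥ 0 with Σ_ℓ k^R_ℓ > 0, and a nonempty L₀ ⊆ {1,…,L} such that for ℓ ∈ L₀ every μ^R_{ℓ,i} converges weakly to γ|_{A_{ℓ,i}} and k^R_ℓ → ∞, while for ℓ ∉ L₀ both k^R_ℓ and μ^R_{ℓ,i}(X) stay bounded in R — define the combined measure μ̂^R := (Σ_ℓ k^R_ℓ)⁻¹ Σ_ℓ k^R_ℓ Σ_{i∈I_ℓ} μ^R_{ℓ,i} and the combined normalization estimate ω̂^R := μ̂^R(X). Then ω̂^R → γ(X) as R → ∞, and the self-normalized measures (ω̂^R)⁻¹ · μ̂^R converge weakly to (γ(X))⁻¹ · γ. -/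

import Mathlib

open MeasureTheory Filter Topology
open scoped NNReal ENNReal BoundedContinuousFunction

/-- Weak convergence of a sequence of (finite Borel) measures: convergence of integrals of
all bounded continuous real-valued functions. -/
def WeakConv {X : Type*} [MeasurableSpace X] [TopologicalSpace X]
    (μ : ℕ → Measure X) (ν : Measure X) : Prop :=
  ∀ f : X →ᵇ ℝ,
    Tendsto (fun n => ∫ x, f x ∂(μ n)) atTop (𝓝 (∫ x, f x ∂ν))

theorem combined_estimator_self_normalized_convergence
    {X : Type*} [MetricSpace X] [MeasurableSpace X] [BorelSpace X]
    (γ : Measure X) [IsFiniteMeasure γ] (hγpos : 0 < γ Set.univ)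
    (L : ℕ) (hL : 1 ≤ L)
    (ι : Fin L → Type*) [∀ ℓ, Fintype (ι ℓ)]
    (A : ∀ ℓ : Fin L, ι ℓ → Set X)
    (hAmeas : ∀ ℓ i, MeasurableSet (A ℓ i))
    (hAdisj : ∀ ℓ, Pairwise fun i j => Disjoint (A ℓ i) (A ℓ j))
    (hAcover : ∀ ℓ, (⋃ i, A ℓ i) = Set.univ)
    (μ : ℕ → ∀ ℓ : Fin L, ι ℓ → Measure X)
    (hμfin : ∀ R ℓ i, IsFiniteMeasure (μ R ℓ i))
    (k : ℕ → Fin L → ℝ≥0)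
    (hkpos : ∀ R, 0 < ∑ ℓ, k R ℓ)
    (L₀ : Set (Fin L)) (hL₀ : L₀.Nonempty)
    (ha : ∀ ℓ ∈ L₀, ∀ i, WeakConv (fun R => μ R ℓ i) (γ.restrict (A ℓ i)))
    (hb : ∀ ℓ ∈ L₀, Tendsto (fun R => k R ℓ) atTop atTop)
    (hc₁ : ∀ ℓ ∉ L₀, ∃ C : ℝ≥0, ∀ R, k R ℓ ≤ C)
    (hc₂ : ∀ ℓ ∉ L₀, ∃ C : ℝ≥0, ∀ R (i : ι ℓ), μ R ℓ i Set.univ ≤ (C : ℝ≥0∞))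
    (μhat : ℕ → Measure X)
    (hμhat : ∀ R, μhat R = (∑ ℓ, k R ℓ)⁻¹ • ∑ ℓ, k R ℓ • ∑ i, μ R ℓ i) :
    Tendsto (fun R => μhat R Set.univ) atTop (𝓝 (γ Set.univ)) ∧
    WeakConv (fun R => (μhat R Set.univ)⁻¹ • μhat R) ((γ Set.univ)⁻¹ • γ) := by
  classical
  haveI := hμfin
  set s : ℕ → ℝ := fun R => ((∑ ℓ, k R ℓ : ℝ≥0) : ℝ) with hs
  have hspos : ∀ R, 0 < s R := fun R => by exact_mod_cast hkpos R
  -- the sum of weights tends to infinity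
  obtain ⟨ℓ₀, hℓ₀⟩ := hL₀
  have hstop : Tendsto s atTop atTop := by
    have h1 : Tendsto (fun R => ((k R ℓ₀ : ℝ))) atTop atTop := by
      have := hb ℓ₀ hℓ₀
      rw [← NNReal.tendsto_coe_atTop] at this
      exact this
    refine tendsto_atTop_mono (fun R => ?_) h1
    exact_mod_cast Finset.single_le_sum (f := fun ℓ => k R ℓ)
      (fun i _ => zero_le) (Finset.mem_univ ℓ₀)
  -- finiteness of intermediate measures
  have hsumfin : ∀ R ℓ, IsFiniteMeasure (∑ i, μ R ℓ i) := by
    intro R ℓ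
    constructor
    rw [Measure.finset_sum_apply]
    exact ENNReal.sum_lt_top.mpr fun i _ => measure_lt_top _ _
  haveI := hsumfin
  have hμhatfin : ∀ R, IsFiniteMeasure (μhat R) := by
    intro R
    rw [hμhat R]
    have : IsFiniteMeasure (∑ ℓ, k R ℓ • ∑ i, μ R ℓ i) := by
      constructor
      rw [Measure.finset_sum_apply]
      exact ENNReal.sum_lt_top.mpr fun ℓ _ => measure_lt_top _ _
    exact isFiniteMeasureSMulNNReal
  haveI := hμhatfin
  -- the partition reconstructs γ
  have hpart : ∀ ℓ, (∑ i, γ.restrict (A ℓ i)) = γ := by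
    intro ℓ
    ext S hS
    rw [Measure.finset_sum_apply]
    simp only [Measure.restrict_apply hS]
    have hdis : Pairwise (Function.onFun Disjoint fun i => S ∩ A ℓ i) := by
      intro i j hij
      exact ((hAdisj ℓ hij).mono Set.inter_subset_right Set.inter_subset_right)
    have hme := measure_iUnion (μ := γ) hdis (fun i => hS.inter (hAmeas ℓ i))
    rw [← Set.inter_iUnion, hAcover ℓ, Set.inter_univ] at hme
    rw [hme, tsum_fintype]
  -- the integral formula
  have hint : ∀ (f : X →ᵇ ℝ) (R), ∫ x, f x ∂(μhat R)
      = (s R)⁻¹ * ∑ ℓ, (k R ℓ : ℝ) * ∑ i, ∫ x, f x ∂(μ R ℓ i) := by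
    intro f R
    have inner : ∀ ℓ : Fin L, ∫ x, f x ∂(∑ i, μ R ℓ i) = ∑ i, ∫ x, f x ∂(μ R ℓ i) :=
      fun ℓ => integral_finset_sum_measure (fun i _ => (f.integrable _))
    rw [hμhat R, integral_smul_nnreal_measure]
    rw [integral_finset_sum_measure (fun ℓ _ => (f.integrable _))]
    simp only [integral_smul_nnreal_measure, inner, NNReal.smul_def, smul_eq_mul,
      NNReal.coe_inv]
    rfl
  -- main convergence of integrals
  have key : ∀ f : X →ᵇ ℝ,
      Tendsto (fun R => ∫ x, f x ∂(μhat R)) atTop (𝓝 (∫ x, f x ∂γ)) := by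
    intro f
    set I : ℝ := ∫ x, f x ∂γ with hI
    set T : ℕ → Fin L → ℝ := fun R ℓ => ∑ i, ∫ x, f x ∂(μ R ℓ i) with hT
    have hterm : ∀ ℓ : Fin L, Tendsto
        (fun R => ((k R ℓ : ℝ) / s R) * (T R ℓ - I)) atTop (𝓝 0) := by
      intro ℓ
      by_cases hℓ : ℓ ∈ L₀
      · -- the term difference tends to 0, weight bounded by 1
        have hTlim : Tendsto (fun R => T R ℓ) atTop (𝓝 I) := by
          have htfs := tendsto_finset_sum Finset.univ (fun i (_ : i ∈ Finset.univ) => ha ℓ hℓ i f)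
          have heq : ∑ i, ∫ x, f x ∂(γ.restrict (A ℓ i)) = I := by
            rw [hI]
            conv_rhs => rw [← hpart ℓ]
            exact (integral_finset_sum_measure (fun i _ => (f.integrable _))).symm
          rw [← heq]
          exact htfs
        have hT0 : Tendsto (fun R => |T R ℓ - I|) atTop (𝓝 0) := by
          have h2 := hTlim.sub_const I
          rw [sub_self] at h2
          simpa using h2.abs
        refine squeeze_zero_norm (fun R => ?_) hT0
        rw [norm_mul]
        have hw0 : 0 ≤ (k R ℓ : ℝ) / s R :=
          div_nonneg (by positivity) (hspos R).le
        have hw1 : (k R ℓ : ℝ) / s R ≤ 1 := by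
          rw [div_le_one (hspos R)]
          exact_mod_cast Finset.single_le_sum (f := fun ℓ => k R ℓ)
            (fun i _ => zero_le) (Finset.mem_univ ℓ)
        calc ‖(k R ℓ : ℝ) / s R‖ * ‖T R ℓ - I‖
            ≤ 1 * ‖T R ℓ - I‖ := by
              apply mul_le_mul_of_nonneg_right _ (norm_nonneg _)
              rw [Real.norm_eq_abs, abs_of_nonneg hw0]; exact hw1
          _ = |T R ℓ - I| := by rw [one_mul, Real.norm_eq_abs]
      · -- weight tends to 0, terms bounded
        obtain ⟨C, hC⟩ := hc₁ ℓ hℓ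
        obtain ⟨D, hD⟩ := hc₂ ℓ hℓ
        set M : ℝ := (Fintype.card (ι ℓ) : ℝ) * (‖f‖ * D) + |I| with hM
        have hM0 : 0 ≤ M := by positivity
        have hbound : ∀ R, ‖((k R ℓ : ℝ) / s R) * (T R ℓ - I)‖
            ≤ (C : ℝ) * M / s R := by
          intro R
          rw [norm_mul]
          have h1 : ‖(k R ℓ : ℝ) / s R‖ ≤ (C : ℝ) / s R := by
            rw [Real.norm_eq_abs, abs_of_nonneg (div_nonneg (by positivity) (hspos R).le)]
            gcongr
            exact_mod_cast hC R
          have h2 : ‖T R ℓ - I‖ ≤ M := by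
            rw [hM]
            refine (norm_sub_le _ _).trans (add_le_add ?_ (le_of_eq (Real.norm_eq_abs I)))
            calc ‖T R ℓ‖ ≤ ∑ i, ‖∫ x, f x ∂(μ R ℓ i)‖ := norm_sum_le _ _
              _ ≤ ∑ i : ι ℓ, ‖f‖ * (D : ℝ) := by
                  refine Finset.sum_le_sum fun i _ => ?_
                  have h3 : ‖∫ x, f x ∂(μ R ℓ i)‖ ≤ ‖f‖ * (μ R ℓ i Set.univ).toReal :=
                    norm_integral_le_of_norm_le_const
                      (Filter.Eventually.of_forall fun x => f.norm_coe_le_norm x)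
                  refine h3.trans (mul_le_mul_of_nonneg_left ?_ (norm_nonneg f))
                  exact ENNReal.toReal_le_coe_of_le_coe (hD R i)
              _ = (Fintype.card (ι ℓ) : ℝ) * (‖f‖ * D) := by
                  rw [Finset.sum_const, Finset.card_univ, nsmul_eq_mul]
          calc ‖(k R ℓ : ℝ) / s R‖ * ‖T R ℓ - I‖
              ≤ ((C : ℝ) / s R) * M := by
                refine mul_le_mul h1 h2 (norm_nonneg _) (div_nonneg (by positivity) (hspos R).le)
            _ = (C : ℝ) * M / s R := by ring
        refine squeeze_zero_norm hbound ?_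
        exact Tendsto.div_atTop tendsto_const_nhds hstop
    -- representation of the integral
    have hrep : ∀ R, ∫ x, f x ∂(μhat R)
        = I + ∑ ℓ, ((k R ℓ : ℝ) / s R) * (T R ℓ - I) := by
      intro R
      have hws : ∑ ℓ, (k R ℓ : ℝ) / s R = 1 := by
        rw [← Finset.sum_div, div_eq_one_iff_eq (hspos R).ne']
        push_cast [hs]
        rfl
      have h4 : ∑ ℓ, ((k R ℓ : ℝ) / s R) * (T R ℓ - I)
          = (∑ ℓ, ((k R ℓ : ℝ) / s R) * T R ℓ) - I := by
        simp only [mul_sub]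
        rw [Finset.sum_sub_distrib, ← Finset.sum_mul, hws, one_mul]
      rw [h4, hint f R, Finset.mul_sum]
      have h5 : ∀ ℓ : Fin L, (s R)⁻¹ * ((k R ℓ : ℝ) * T R ℓ)
          = ((k R ℓ : ℝ) / s R) * T R ℓ := fun ℓ => by ring
      rw [Finset.sum_congr rfl fun ℓ _ => h5 ℓ]
      ring
    simp only [hrep]
    have hsum0 : Tendsto (fun R => ∑ ℓ, ((k R ℓ : ℝ) / s R) * (T R ℓ - I))
        atTop (𝓝 0) := by
      have := tendsto_finset_sum Finset.univ (fun ℓ (_ : ℓ ∈ Finset.univ) => hterm ℓ)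
      simpa using this
    have := hsum0.const_add I
    simpa using this
  -- first part: convergence of the total mass
  have homega : Tendsto (fun R => μhat R Set.univ) atTop (𝓝 (γ Set.univ)) := by
    have h1 := key (BoundedContinuousFunction.const X (1 : ℝ))
    simp only [BoundedContinuousFunction.const_apply, integral_const,
      smul_eq_mul, mul_one] at h1
    rw [← ENNReal.tendsto_toReal_iff (fun R => measure_ne_top _ _) (measure_ne_top γ _)]
    exact h1
  refine ⟨homega, ?_⟩
  -- second part: self-normalized weak convergence
  intro f
  have hinv : Tendsto (fun R => ((μhat R Set.univ)⁻¹).toReal) atTop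
      (𝓝 (((γ Set.univ)⁻¹).toReal)) := by
    have h2 : Tendsto (fun R => (μhat R Set.univ)⁻¹) atTop (𝓝 ((γ Set.univ)⁻¹)) :=
      homega.inv
    have hne : (γ Set.univ)⁻¹ ≠ ∞ := by
      simp [ENNReal.inv_ne_top, hγpos.ne']
    exact (ENNReal.tendsto_toReal hne).comp h2
  have hform : ∀ R, ∫ x, f x ∂((μhat R Set.univ)⁻¹ • μhat R)
      = ((μhat R Set.univ)⁻¹).toReal * ∫ x, f x ∂(μhat R) := by
    intro R
    rw [integral_smul_measure]
    rfl
  have hform2 : ∫ x, f x ∂((γ Set.univ)⁻¹ • γ)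
      = ((γ Set.univ)⁻¹).toReal * ∫ x, f x ∂γ := by
    rw [integral_smul_measure]
    rfl
  simp only [hform, hform2]
  exact hinv.mul (key f)
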